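/- Fix μ > 0 and suppose V_μ is (Fréchet) differentiable at x̄ ∈ ℝ^n. Then there exists a subgradient v = (v₁, …, v_m) of g at F(x̄) + ∇F(x̄)(p_μ(x̄) − x̄) such that ∇V_μ(x̄) = (Σ_{i=1}^m v_i ∇²f_i(x̄))(p_μ(x̄) − x̄) + μ(x̄ − p_μ(x̄)), where f_i denotes the i-th coordinate function of F and ∇²f_i(x̄) its Hessian at x̄. -/

import Mathlib

open scoped RealInnerProductSpace

open Set Filter Topology Pointwise

noncomputable def dirSlope {EM : Type*} [NormedAddCommGroup EM] [NormedSpace ℝ EM]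
    (g : EM → ℝ) (z d : EM) (t : ℝ) : ℝ := (g (z + t • d) - g z) / t

noncomputable def dirDeriv {EM : Type*} [NormedAddCommGroup EM] [NormedSpace ℝ EM]
    (g : EM → ℝ) (z d : EM) : ℝ := sInf (dirSlope g z d '' Set.Ioi 0)

section slope
variable {EM : Type*} [NormedAddCommGroup EM] [NormedSpace ℝ EM]
  {g : EM → ℝ} (hg : ConvexOn ℝ Set.univ g) (z d : EM)

include hg

lemma slope_mono {s t : ℝ} (hs : 0 < s) (hst : s ≤ t) :
    dirSlope g z d s ≤ dirSlope g z d t := by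
  have ht : 0 < t := hs.trans_le hst
  have key : g (z + s • d) ≤ (1 - s/t) * g z + (s/t) * g (z + t • d) := by
    have ha : (0:ℝ) ≤ 1 - s/t := sub_nonneg.mpr (div_le_one_of_le₀ hst ht.le)
    have hb : (0:ℝ) ≤ s/t := by positivity
    have hab : (1 - s/t) + (s/t) = 1 := by ring
    have h2 := hg.2 (Set.mem_univ z) (Set.mem_univ (z + t • d)) ha hb hab
    have h3 : (1 - s/t) • z + (s/t) • (z + t • d) = z + s • d := by
      rw [smul_add, smul_smul, div_mul_cancel₀ _ ht.ne']
      module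
    rwa [h3, smul_eq_mul, smul_eq_mul] at h2
  rw [dirSlope, dirSlope, div_le_div_iff₀ hs ht]
  have : (g (z + s • d) - g z) ≤ (s/t) * (g (z + t • d) - g z) := by nlinarith
  calc (g (z + s • d) - g z) * t ≤ ((s/t) * (g (z + t • d) - g z)) * t := by nlinarith
    _ = (g (z + t • d) - g z) * s := by field_simp

lemma slope_lb {s : ℝ} (hs : 0 < s) :
    g z - g (z - d) ≤ dirSlope g z d s := by
  have ha : (0:ℝ) ≤ 1/(1+s) := by positivity
  have hb : (0:ℝ) ≤ s/(1+s) := by positivity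
  have hab : 1/(1+s) + s/(1+s) = (1:ℝ) := by field_simp
  have h2 := hg.2 (Set.mem_univ (z + s • d)) (Set.mem_univ (z - d)) ha hb hab
  have h3 : (1/(1+s)) • (z + s • d) + (s/(1+s)) • (z - d) = z := by
    have h1s : (1:ℝ) + s ≠ 0 := by positivity
    rw [smul_add, smul_sub, smul_smul]
    match_scalars <;> field_simp <;> ring
  rw [h3, smul_eq_mul, smul_eq_mul] at h2
  have h1s : (0:ℝ) < 1 + s := by positivity
  have h5 : g z ≤ (g (z + s • d) + s * g (z - d))/(1+s) := by
    refine h2.trans (le_of_eq ?_); ring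
  rw [le_div_iff₀ h1s] at h5
  rw [dirSlope, le_div_iff₀ hs]
  nlinarith [h5]

lemma bddBelow_slope : BddBelow (dirSlope g z d '' Set.Ioi 0) := by
  refine ⟨g z - g (z - d), ?_⟩
  rintro x ⟨t, ht, rfl⟩
  exact slope_lb hg z d ht

lemma dirDeriv_le_slope {t : ℝ} (ht : 0 < t) : dirDeriv g z d ≤ dirSlope g z d t :=
  csInf_le (bddBelow_slope hg z d) ⟨t, ht, rfl⟩

lemma le_dirDeriv {c : ℝ} (hc : ∀ t : ℝ, 0 < t → c ≤ dirSlope g z d t) :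
    c ≤ dirDeriv g z d :=
  le_csInf (⟨_, ⟨1, Set.mem_Ioi.mpr one_pos, rfl⟩⟩) (by rintro x ⟨t, ht, rfl⟩; exact hc t ht)

lemma dirDeriv_zero : dirDeriv g z 0 = 0 := by
  have h1 : dirSlope g z 0 '' Set.Ioi 0 = {0} := by
    apply Subset.antisymm
    · rintro x ⟨t, ht, rfl⟩
      simp [dirSlope]
    · rintro x rfl
      exact ⟨1, Set.mem_Ioi.mpr one_pos, by simp [dirSlope]⟩
  rw [dirDeriv, h1, csInf_singleton]

lemma dirDeriv_smul {c : ℝ} (hc : 0 < c) :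
    dirDeriv g z (c • d) = c * dirDeriv g z d := by
  have hQ : ∀ t : ℝ, 0 < t → dirSlope g z (c • d) t = c * dirSlope g z d (c * t) := by
    intro t ht
    have hc' : c ≠ 0 := hc.ne'
    have ht' : t ≠ 0 := ht.ne'
    simp only [dirSlope, smul_smul, mul_comm t c]
    field_simp
  have hset : dirSlope g z (c • d) '' Set.Ioi 0 = c • (dirSlope g z d '' Set.Ioi 0) := by
    ext x
    simp only [Set.mem_smul_set, Set.mem_image, Set.mem_Ioi]
    constructor
    · rintro ⟨t, ht, rfl⟩
      exact ⟨dirSlope g z d (c*t), ⟨c*t, mul_pos hc ht, rfl⟩, by rw [smul_eq_mul, hQ t ht]⟩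
    · rintro ⟨y, ⟨t, ht, rfl⟩, rfl⟩
      refine ⟨t/c, by positivity, ?_⟩
      rw [hQ _ (by positivity), mul_div_cancel₀ _ hc.ne', smul_eq_mul]
  rw [dirDeriv, hset, Real.sInf_smul_of_nonneg hc.le, smul_eq_mul, dirDeriv]

lemma dirDeriv_add (e : EM) :
    dirDeriv g z (d + e) ≤ dirDeriv g z d + dirDeriv g z e := by
  refine le_of_forall_pos_le_add fun ε hε => ?_
  obtain ⟨x1, ⟨t1, ht1, rfl⟩, hx1⟩ := exists_lt_of_csInf_lt
    (⟨_, ⟨1, Set.mem_Ioi.mpr one_pos, rfl⟩⟩ : (dirSlope g z d '' Set.Ioi 0).Nonempty)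
    (show sInf _ < dirDeriv g z d + ε/2 by rw [← dirDeriv]; linarith)
  obtain ⟨x2, ⟨t2, ht2, rfl⟩, hx2⟩ := exists_lt_of_csInf_lt
    (⟨_, ⟨1, Set.mem_Ioi.mpr one_pos, rfl⟩⟩ : (dirSlope g z e '' Set.Ioi 0).Nonempty)
    (show sInf _ < dirDeriv g z e + ε/2 by rw [← dirDeriv]; linarith)
  set t := min t1 t2 with htdef
  have ht : 0 < t := lt_min ht1 ht2
  have key : dirSlope g z (d+e) (t/2) ≤ dirSlope g z d t + dirSlope g z e t := by
    have hmid : z + (t/2) • (d + e) = (1/2 : ℝ) • (z + t • d) + (1/2 : ℝ) • (z + t • e) := by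
      module
    have ha : (0:ℝ) ≤ (1:ℝ)/2 := by norm_num
    have hab : (1:ℝ)/2 + (1:ℝ)/2 = (1:ℝ) := by norm_num
    have h2 := hg.2 (Set.mem_univ (z + t • d)) (Set.mem_univ (z + t • e)) ha ha hab
    rw [← hmid, smul_eq_mul, smul_eq_mul] at h2
    simp only [dirSlope]
    rw [← add_div, div_le_div_iff₀ (by positivity) ht]
    nlinarith
  have h5 : dirDeriv g z (d+e) ≤ dirSlope g z (d+e) (t/2) :=
    dirDeriv_le_slope hg z (d+e) (by positivity)
  have h6 : dirSlope g z d t ≤ dirSlope g z d t1 := slope_mono hg z d ht (min_le_left _ _)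
  have h7 : dirSlope g z e t ≤ dirSlope g z e t2 := slope_mono hg z e ht (min_le_right _ _)
  linarith

end slope

open scoped RealInnerProductSpace

lemma convex_chain {n m : ℕ}
    (g : EuclideanSpace ℝ (Fin m) → ℝ) (hg : ConvexOn ℝ Set.univ g)
    (z : EuclideanSpace ℝ (Fin m)) (A : EuclideanSpace ℝ (Fin n) →L[ℝ] EuclideanSpace ℝ (Fin m))
    (w : EuclideanSpace ℝ (Fin n))
    (hw : ∀ h : EuclideanSpace ℝ (Fin n), ∀ t : ℝ, 0 < t → ⟪w, h⟫ ≤ dirSlope g z (A h) t) :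
    ∃ v : EuclideanSpace ℝ (Fin m),
      (∀ y, g z + ⟪v, y - z⟫ ≤ g y) ∧ ∀ h, ⟪v, A h⟫ = ⟪w, h⟫ := by
  classical
  have hwσ : ∀ h : EuclideanSpace ℝ (Fin n), ⟪w, h⟫ ≤ dirDeriv g z (A h) :=
    fun h => le_dirDeriv hg z (A h) (hw h)
  set ℓ : EuclideanSpace ℝ (Fin n) →ₗ[ℝ] ℝ :=
    ((innerSL ℝ w : EuclideanSpace ℝ (Fin n) →L[ℝ] ℝ) :
      EuclideanSpace ℝ (Fin n) →ₗ[ℝ] ℝ) with hℓdef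
  have hℓ_apply : ∀ h : EuclideanSpace ℝ (Fin n), ℓ h = ⟪w, h⟫ := fun h => rfl
  set a : EuclideanSpace ℝ (Fin n) →ₗ[ℝ] EuclideanSpace ℝ (Fin m) :=
    (A : EuclideanSpace ℝ (Fin n) →ₗ[ℝ] EuclideanSpace ℝ (Fin m)) with hadef
  have hker : LinearMap.ker a ≤ LinearMap.ker ℓ := by
    intro h hh
    have hAh : A h = 0 := hh
    have h1 : ⟪w, h⟫ ≤ dirDeriv g z (A h) := hwσ h
    have h2 : ⟪w, -h⟫ ≤ dirDeriv g z (A (-h)) := hwσ (-h)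
    rw [hAh] at h1
    rw [map_neg, hAh, neg_zero] at h2
    rw [dirDeriv_zero hg z] at h1 h2
    rw [inner_neg_right] at h2
    have : ⟪w, h⟫ = 0 := le_antisymm h1 (by linarith)
    simpa [LinearMap.mem_ker, hℓ_apply] using this
  set g₀ : LinearMap.range a →ₗ[ℝ] ℝ :=
    ((LinearMap.ker a).liftQ ℓ hker).comp a.quotKerEquivRange.symm.toLinearMap with hg₀def
  have hg₀_apply : ∀ (h : EuclideanSpace ℝ (Fin n)) (hmem : a h ∈ LinearMap.range a), g₀ ⟨a h, hmem⟩ = ⟪w, h⟫ := by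
    intro h hmem
    rw [hg₀def]
    simp only [LinearMap.comp_apply, LinearEquiv.coe_toLinearMap]
    rw [LinearMap.quotKerEquivRange_symm_apply_image a h hmem]
    rw [Submodule.mkQ_apply, Submodule.liftQ_apply]
    exact hℓ_apply h
  set f : EuclideanSpace ℝ (Fin m) →ₗ.[ℝ] ℝ := ⟨LinearMap.range a, g₀⟩ with hfdef
  have hfN : ∀ x : f.domain, f x ≤ dirDeriv g z x := by
    rintro ⟨x, hx⟩
    obtain ⟨h, rfl⟩ := hx
    have : f ⟨a h, LinearMap.mem_range_self a h⟩ = ⟪w, h⟫ := hg₀_apply h _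
    rw [this]
    exact hwσ h
  obtain ⟨φ, hφ_eq, hφ_le⟩ := exists_extension_of_le_sublinear f (fun d => dirDeriv g z d)
    (fun c hc x => dirDeriv_smul hg z x hc)
    (fun x y => dirDeriv_add hg z x y) hfN
  set v : EuclideanSpace ℝ (Fin m) :=
    (InnerProductSpace.toDual ℝ (EuclideanSpace ℝ (Fin m))).symm
      (LinearMap.toContinuousLinearMap φ) with hvdef
  have hv_apply : ∀ d : EuclideanSpace ℝ (Fin m), ⟪v, d⟫ = φ d := by
    intro d
    rw [hvdef]
    exact InnerProductSpace.toDual_symm_apply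
  refine ⟨v, ?_, ?_⟩
  · intro y
    have h1 : ⟪v, y - z⟫ ≤ dirDeriv g z (y - z) := by rw [hv_apply]; exact hφ_le _
    have h2 : dirDeriv g z (y - z) ≤ dirSlope g z (y - z) 1 := dirDeriv_le_slope hg z (y - z) one_pos
    have h3 : dirSlope g z (y - z) 1 = g y - g z := by simp [dirSlope]
    linarith
  · intro h
    have hmem : A h ∈ LinearMap.range a := LinearMap.mem_range_self a h
    have h1 : φ (A h) = f ⟨A h, hmem⟩ := hφ_eq ⟨A h, hmem⟩
    have h2 : f ⟨A h, hmem⟩ = ⟪w, h⟫ := hg₀_apply h hmem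
    rw [hv_apply, h1, h2]
private lemma real_le_of_forall_pos {a b : ℝ} (h : ∀ ε : ℝ, 0 < ε → a ≤ b + ε) : a ≤ b := by
  by_contra h'
  push_neg at h'
  have := h ((a - b)/2) (by linarith)
  linarith


set_option maxHeartbeats 1000000 in
/-- If `V_μ` is differentiable at `x̄`, then there is a subgradient `v` of `g` at
`F x̄ + ∇F(x̄)(p_μ(x̄) - x̄)` such that
`∇V_μ(x̄) = (Σ_i v_i ∇²f_i(x̄))(p_μ(x̄) - x̄) + μ (x̄ - p_μ(x̄))`, where `f_i` is the `i`-th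
coordinate of `F` and `∇²f_i(x̄) u` is realized as the gradient at `x̄` of `z ↦ Df_i(z) u`. -/
theorem stmt_14 {n m : ℕ}
    (F : EuclideanSpace ℝ (Fin n) → EuclideanSpace ℝ (Fin m))
    (g : EuclideanSpace ℝ (Fin m) → ℝ)
    (D : Set (EuclideanSpace ℝ (Fin n)))
    (hF : ContDiff ℝ 2 F)
    (hg : ConvexOn ℝ Set.univ g) (hgc : Continuous g)
    (hDne : D.Nonempty) (hDcl : IsClosed D) (hDcv : Convex ℝ D)
    (p : ℝ → EuclideanSpace ℝ (Fin n) → EuclideanSpace ℝ (Fin n))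
    (V : ℝ → EuclideanSpace ℝ (Fin n) → ℝ)
    (hp : ∀ μ, 0 < μ → ∀ x, p μ x ∈ D ∧ ∀ z ∈ D,
      g (F x + fderiv ℝ F x (p μ x - x)) + μ / 2 * ‖p μ x - x‖ ^ 2 ≤
      g (F x + fderiv ℝ F x (z - x)) + μ / 2 * ‖z - x‖ ^ 2)
    (hV : ∀ μ, 0 < μ → ∀ x,
      V μ x = g (F x + fderiv ℝ F x (p μ x - x)) + μ / 2 * ‖p μ x - x‖ ^ 2)
    (μ : ℝ) (hμ : 0 < μ) (xbar : EuclideanSpace ℝ (Fin n))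
    (hdiff : DifferentiableAt ℝ (V μ) xbar) :
    ∃ v : EuclideanSpace ℝ (Fin m),
      (∀ w, g w ≥ g (F xbar + fderiv ℝ F xbar (p μ xbar - xbar)) +
        ⟪v, w - (F xbar + fderiv ℝ F xbar (p μ xbar - xbar))⟫) ∧
      gradient (V μ) xbar =
        (∑ i : Fin m, v i •
          gradient (fun z => fderiv ℝ (fun w => F w i) z (p μ xbar - xbar)) xbar) +
        μ • (xbar - p μ xbar) := by
  classical
  have hFd : Differentiable ℝ F := hF.differentiable (by norm_num)
  have hF1 : ContDiff ℝ 1 (fderiv ℝ F) := hF.fderiv_right (m := 1) (by norm_num)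
  have hD2d : DifferentiableAt ℝ (fderiv ℝ F) xbar := (hF1.differentiable (by norm_num)) xbar
  set pb := p μ xbar with hpbdef
  set ub : EuclideanSpace ℝ (Fin n) := pb - xbar with hubdef
  set zb : EuclideanSpace ℝ (Fin m) := F xbar + fderiv ℝ F xbar ub with hzbdef
  set D2 := fderiv ℝ (fderiv ℝ F) xbar with hD2def
  set A : EuclideanSpace ℝ (Fin n) →L[ℝ] EuclideanSpace ℝ (Fin m) := D2.flip ub with hAdef
  set G : EuclideanSpace ℝ (Fin n) → EuclideanSpace ℝ (Fin m) :=
    fun x => F x + fderiv ℝ F x (pb - x) with hGdef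
  -- derivative of G
  have hline0 : HasFDerivAt (fun x : EuclideanSpace ℝ (Fin n) => pb - x)
      (-(ContinuousLinearMap.id ℝ (EuclideanSpace ℝ (Fin n)))) xbar := by
    exact ((hasFDerivAt_const (𝕜 := ℝ) pb xbar).sub (hasFDerivAt_id (𝕜 := ℝ) xbar)).congr_fderiv (by simp)
  have h1 : HasFDerivAt (fun x => (fderiv ℝ F x) (pb - x))
      (((fderiv ℝ F xbar).comp (-(ContinuousLinearMap.id ℝ (EuclideanSpace ℝ (Fin n))))) +
        D2.flip (pb - xbar)) xbar :=
    hD2d.hasFDerivAt.clm_apply hline0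
  have hGA : HasFDerivAt G A xbar := by
    have h2 := (hFd xbar).hasFDerivAt.add h1
    have heq : fderiv ℝ F xbar +
        ((fderiv ℝ F xbar).comp (-(ContinuousLinearMap.id ℝ (EuclideanSpace ℝ (Fin n)))) +
          D2.flip (pb - xbar)) = A := by
      refine ContinuousLinearMap.ext fun h => ?_
      simp only [ContinuousLinearMap.add_apply, ContinuousLinearMap.comp_apply,
        ContinuousLinearMap.neg_apply, ContinuousLinearMap.coe_id', id_eq, map_neg,
        ContinuousLinearMap.flip_apply, hAdef, hubdef]
      abel
    rw [heq] at h2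
    exact h2
  -- geometric identity for the quadratic term
  have hq : ∀ x : EuclideanSpace ℝ (Fin n),
      μ/2 * ‖pb - x‖^2 = μ/2 * ‖ub‖^2 - μ * ⟪ub, x - xbar⟫ + μ/2 * ‖x - xbar‖^2 := by
    intro x
    have h3 : pb - x = ub - (x - xbar) := by rw [hubdef]; abel
    rw [h3, norm_sub_sq_real]
    ring
  have hVle : ∀ x, V μ x ≤ g (G x) + μ/2 * ‖pb - x‖^2 := by
    intro x
    rw [hV μ hμ x]
    simp only [hGdef]
    exact (hp μ hμ x).2 pb (hp μ hμ xbar).1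
  have hVeq : V μ xbar = g zb + μ/2 * ‖ub‖^2 := hV μ hμ xbar
  have hGz : G xbar = zb := by
    simp only [hGdef, hzbdef, hubdef]
  have hgradV : ∀ h, ⟪gradient (V μ) xbar, h⟫ = fderiv ℝ (V μ) xbar h := by
    intro h
    rw [gradient]
    exact InnerProductSpace.toDual_symm_apply
  -- Lipschitz bound for g near zb
  obtain ⟨K, hK⟩ : ∃ K, LipschitzOnWith K g (Metric.ball zb 1) := by
    have hb : Bornology.IsBounded (g '' Metric.ball zb 2) :=
      (((isCompact_closedBall zb 2).image hgc).isBounded).subset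
        (Set.image_mono Metric.ball_subset_closedBall)
    exact (hg.subset (Set.subset_univ _) (convex_ball zb 2)).exists_lipschitzOnWith_of_isBounded
      (by norm_num) hb
  -- the key slope inequality
  have hkey : ∀ h : EuclideanSpace ℝ (Fin n), ∀ t : ℝ, 0 < t →
      ⟪gradient (V μ) xbar + μ • ub, h⟫ ≤ dirSlope g zb (A h) t := by
    intro h t ht
    refine real_le_of_forall_pos fun ε hε => ?_
    set ε' : ℝ := ε/(4*((K:ℝ)+1)) with hε'def
    have hε' : (0:ℝ) < ε' := by positivity
    have hKe : (K:ℝ)*ε' ≤ ε/4 := by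
      have hKnn : (0:ℝ) ≤ (K:ℝ) := K.coe_nonneg
      have h2 : ((K:ℝ)+1)*ε' = ε/4 := by
        rw [hε'def]
        field_simp
      nlinarith
    have hline : HasDerivAt (fun s : ℝ => xbar + s • h) h 0 := by
      simpa using ((hasDerivAt_id (0:ℝ)).smul_const h).const_add xbar
    have hx0 : xbar + (0:ℝ) • h = xbar := by simp
    have hVd : HasDerivAt (fun s : ℝ => V μ (xbar + s • h)) (fderiv ℝ (V μ) xbar h) 0 := by
      have hl : HasFDerivAt (V μ) (fderiv ℝ (V μ) xbar) (xbar + (0:ℝ) • h) := by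
        rw [hx0]; exact hdiff.hasFDerivAt
      exact hl.comp_hasDerivAt 0 hline
    have hGd : HasDerivAt (fun s : ℝ => G (xbar + s • h)) (A h) 0 := by
      have hl : HasFDerivAt G A (xbar + (0:ℝ) • h) := by rw [hx0]; exact hGA
      exact hl.comp_hasDerivAt 0 hline
    -- eventually bounds
    have ev1 : ∀ᶠ s in nhdsWithin 0 (Set.Ioi (0:ℝ)),
        |V μ (xbar + s • h) - V μ xbar - s * (fderiv ℝ (V μ) xbar h)| ≤ ε/4 * s := by
      have hlo := Asymptotics.isLittleO_iff.mp (hasDerivAt_iff_isLittleO.mp hVd)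
        (show (0:ℝ) < ε/4 by positivity)
      filter_upwards [hlo.filter_mono nhdsWithin_le_nhds, self_mem_nhdsWithin] with s hs hs0
      rw [Set.mem_Ioi] at hs0
      simp only [hx0, sub_zero, smul_eq_mul, Real.norm_eq_abs] at hs
      rwa [abs_of_pos hs0] at hs
    have ev2 : ∀ᶠ s in nhdsWithin 0 (Set.Ioi (0:ℝ)),
        ‖G (xbar + s • h) - zb - s • (A h)‖ ≤ ε' * s := by
      have hlo := Asymptotics.isLittleO_iff.mp (hasDerivAt_iff_isLittleO.mp hGd) hε'
      filter_upwards [hlo.filter_mono nhdsWithin_le_nhds, self_mem_nhdsWithin] with s hs hs0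
      rw [Set.mem_Ioi] at hs0
      simp only [hx0, hGz, sub_zero, Real.norm_eq_abs] at hs
      rwa [abs_of_pos hs0] at hs
    have ev3 : ∀ᶠ s in nhdsWithin 0 (Set.Ioi (0:ℝ)),
        G (xbar + s • h) ∈ Metric.ball zb 1 := by
      have hcont : Filter.Tendsto (fun s : ℝ => G (xbar + s • h)) (nhds 0) (nhds zb) := by
        have := hGd.continuousAt.tendsto
        simpa [hx0, hGz] using this
      exact (hcont.mono_left nhdsWithin_le_nhds).eventually_mem (Metric.ball_mem_nhds zb one_pos)
    have ev4 : ∀ᶠ s in nhdsWithin 0 (Set.Ioi (0:ℝ)),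
        zb + s • (A h) ∈ Metric.ball zb 1 := by
      have hcont : Filter.Tendsto (fun s : ℝ => zb + s • (A h)) (nhds 0) (nhds zb) := by
        have : Filter.Tendsto (fun s : ℝ => zb + s • (A h)) (nhds 0)
            (nhds (zb + (0:ℝ) • (A h))) := by
          exact (Filter.tendsto_id.smul_const (A h)).const_add zb
        simpa using this
      exact (hcont.mono_left nhdsWithin_le_nhds).eventually_mem (Metric.ball_mem_nhds zb one_pos)
    have ev5 : ∀ᶠ s in nhdsWithin 0 (Set.Ioi (0:ℝ)), s ∈ Set.Ioc (0:ℝ) t :=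
      Ioc_mem_nhdsGT_of_mem ⟨le_refl 0, ht⟩
    have ev6 : ∀ᶠ s in nhdsWithin 0 (Set.Ioi (0:ℝ)), μ * s * ‖h‖^2/2 ≤ ε/4 := by
      have hδ : (0:ℝ) < ε/(2*(μ*‖h‖^2+1)) := by positivity
      filter_upwards [Ioc_mem_nhdsGT_of_mem (Set.mem_Ico.mpr ⟨le_refl 0, hδ⟩)] with s hs
      obtain ⟨hs0, hsδ⟩ := hs
      have h5 : (0:ℝ) < 2*(μ*‖h‖^2+1) := by positivity
      rw [le_div_iff₀ h5] at hsδ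
      nlinarith [sq_nonneg ‖h‖, hε.le, hs0.le]
    obtain ⟨s, ⟨⟨hs1, hs2, hs3, hs4, hs5, hs6⟩, hs0⟩⟩ :=
      ((ev1.and (ev2.and (ev3.and (ev4.and (ev5.and ev6))))).and self_mem_nhdsWithin).exists
    have hs2' := hs2; have hs3' := hs3; have hs4' := hs4; have hs5' := hs5; have hs6' := hs6
    -- main chain at s
    have e1 : V μ xbar + s * (fderiv ℝ (V μ) xbar h) - ε/4 * s ≤ V μ (xbar + s • h) := by
      have := abs_le.mp hs1
      linarith [this.1]
    have e2 : V μ (xbar + s • h) ≤ g (G (xbar + s • h)) +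
        (μ/2 * ‖ub‖^2 - μ * (s * ⟪ub, h⟫) + μ/2 * (s^2 * ‖h‖^2)) := by
      have h6 := hVle (xbar + s • h)
      have h7 := hq (xbar + s • h)
      have h8 : (xbar + s • h) - xbar = s • h := by abel
      rw [h8] at h7
      rw [real_inner_smul_right] at h7
      have h9 : ‖s • h‖^2 = s^2 * ‖h‖^2 := by
        rw [norm_smul, mul_pow, Real.norm_eq_abs, sq_abs]
      rw [h9] at h7
      linarith [h6, h7.le, h7.ge]
    have e3 : g (G (xbar + s • h)) - g (zb + s • (A h)) ≤ ε/4 * s := by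
      have hd := hK.dist_le_mul _ hs3' _ hs4'
      rw [Real.dist_eq, dist_eq_norm] at hd
      have h10 : G (xbar + s • h) - (zb + s • (A h)) = G (xbar + s • h) - zb - s • (A h) := by
        abel
      rw [h10] at hd
      have h12 : (K:ℝ) * ‖G (xbar + s • h) - zb - s • (A h)‖ ≤ (K:ℝ) * (ε' * s) :=
        mul_le_mul_of_nonneg_left hs2' K.coe_nonneg
      have h13 : g (G (xbar + s • h)) - g (zb + s • (A h)) ≤
          |g (G (xbar + s • h)) - g (zb + s • (A h))| := le_abs_self _
      have h14 : g (G (xbar + s • h)) - g (zb + s • (A h)) ≤ (K:ℝ) * (ε' * s) :=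
        h13.trans (hd.trans h12)
      have h15 : (K:ℝ) * (ε' * s) ≤ ε/4 * s := by
        have h16 := mul_le_mul_of_nonneg_right hKe hs0.le
        calc (K:ℝ) * (ε' * s) = ((K:ℝ) * ε') * s := by ring
          _ ≤ (ε/4) * s := h16
      linarith
    have e4 : μ * (s^2 * ‖h‖^2)/2 ≤ ε/4 * s := by
      have h16 := mul_le_mul_of_nonneg_right hs6' hs0.le
      calc μ * (s^2 * ‖h‖^2)/2 = (μ * s * ‖h‖^2/2) * s := by ring
        _ ≤ (ε/4) * s := h16
    have hwh : ⟪gradient (V μ) xbar + μ • ub, h⟫ =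
        fderiv ℝ (V μ) xbar h + μ * ⟪ub, h⟫ := by
      rw [inner_add_left, real_inner_smul_left, hgradV]
    have hslope_s : ⟪gradient (V μ) xbar + μ • ub, h⟫ - ε ≤ dirSlope g zb (A h) s := by
      rw [dirSlope, le_div_iff₀ hs0, hwh]
      have hexp : (fderiv ℝ (V μ) xbar h + μ * ⟪ub, h⟫ - ε) * s =
          s * (fderiv ℝ (V μ) xbar h) + μ * (s * ⟪ub, h⟫) - ε * s := by ring
      rw [hexp]
      linarith [e1, e2, e3, e4, hVeq, mul_pos hε hs0]
    have hmono : dirSlope g zb (A h) s ≤ dirSlope g zb (A h) t :=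
      slope_mono hg zb (A h) hs0 hs5'.2
    linarith
  -- apply the convex-analytic chain rule
  obtain ⟨v, hsub, hAdj⟩ := convex_chain g hg zb A (gradient (V μ) xbar + μ • ub) hkey
  refine ⟨v, fun w' => hsub w', ?_⟩
  -- derivative computations for the coordinate functions
  have hproj : ∀ (i : Fin m) (x' : EuclideanSpace ℝ (Fin n)),
      HasFDerivAt (fun w => F w i)
        ((EuclideanSpace.proj i).comp (fderiv ℝ F x')) x' := by
    intro i x'
    have h14 := ((EuclideanSpace.proj (𝕜 := ℝ) i).hasFDerivAt
      (x := F x')).comp x' (hFd x').hasFDerivAt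
    exact h14
  have hφval : ∀ i : Fin m, (fun z' => fderiv ℝ (fun w => F w i) z' ub) =
      fun z' => (fderiv ℝ F z' ub) i := by
    intro i; funext z'
    rw [(hproj i z').fderiv]
    rfl
  have hinner : HasFDerivAt (fun z' => (fderiv ℝ F z') ub) (D2.flip ub) xbar := by
    have := hD2d.hasFDerivAt.clm_apply (hasFDerivAt_const ub xbar)
    simpa using this
  have hφd : ∀ i : Fin m, HasFDerivAt (fun z' => (fderiv ℝ F z' ub) i)
      ((EuclideanSpace.proj i).comp (D2.flip ub)) xbar := by
    intro i
    have h15 := ((EuclideanSpace.proj (𝕜 := ℝ) i).hasFDerivAt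
      (x := fderiv ℝ F xbar ub)).comp xbar hinner
    exact h15
  have hgrad' : ∀ (f : EuclideanSpace ℝ (Fin n) → ℝ) (h' : EuclideanSpace ℝ (Fin n)),
      ⟪gradient f xbar, h'⟫ = fderiv ℝ f xbar h' := by
    intro f h'; rw [gradient]; exact InnerProductSpace.toDual_symm_apply
  refine ext_inner_right ℝ fun h => ?_
  rw [inner_add_left, sum_inner]
  have hterm : ∀ i : Fin m,
      ⟪v i • gradient (fun z => fderiv ℝ (fun w => F w i) z ub) xbar, h⟫ =
        v i * (A h i) := by
    intro i
    rw [real_inner_smul_left, hgrad', hφval i, (hφd i).fderiv]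
    rfl
  have hsum : (∑ i : Fin m,
      ⟪v i • gradient (fun z => fderiv ℝ (fun w => F w i) z ub) xbar, h⟫)
      = ⟪v, A h⟫ := by
    rw [PiLp.inner_apply]
    refine Finset.sum_congr rfl fun i _ => ?_
    rw [hterm i]
    simp [RCLike.inner_apply]
    ring
  rw [hsum, hAdj h, inner_add_left, real_inner_smul_left, real_inner_smul_left, hgradV]
  have hnegu : ⟪xbar - pb, h⟫ = -⟪ub, h⟫ := by
    rw [show xbar - pb = -(pb - xbar) by abel, inner_neg_left, hubdef]
  rw [hnegu]
  ring
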